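/- Let φ be a formula of BndSCL. Then φ is valid under bounded semantics (true in every suitable model under every suitable assignment) if and only if the first-order approximant Φⁿ_φ is valid for some n ∈ ℕ. -/

import Mathlib

/-
Common formalization of the logics SCL (static computation logic, unbounded
game-theoretic semantics) and BndSCL (bounded semantics), following the paper
"First-order logic with self-reference".

* Games are played on arbitrary (possibly infinite) arenas; plays are maximal
  walks; strategies are functions from finite walks (histories) to positions;
  infinite plays, and finite plays ending at a dead end where `win` holds for
  neither player, are won by nobody.
* The semantic games are formalized with positions carrying the current
  (sub)formula, an environment binding each label symbol to the labelled
  formula it most recently named (this is the standard closure rendering of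
  "reference formula of a claim-symbol occurrence"), the current assignment
  and the polarity (+ = true, − = false).  The bounded game additionally
  carries a clock value.
-/

set_option autoImplicit false

universe u

/-! ## Generic two-player games on (possibly infinite) arenas -/

inductive Player : Type
  | eloise : Player
  | abelard : Player
deriving DecidableEq

def Player.opp : Player → Player
  | .eloise => .abelard
  | .abelard => .eloise

/-- A game arena: an ownership function (corresponding to the partition
`V = V₀ ∪ V₁`), an edge relation, and a predicate telling which player (if
any) wins a play ending at a given dead-end position. -/
structure GameArena (P : Type u) where
  turn : P → Player
  edge : P → P → Prop
  win : P → Player → Prop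

namespace GameArena

variable {P : Type u} (A : GameArena P)

def DeadEnd (u : P) : Prop := ∀ x, ¬ A.edge u x

/-- `w` is a finite nonempty walk whose first element is `v`. -/
def IsWalkFrom (v : P) (w : List P) : Prop :=
  w.head? = some v ∧ List.Chain' A.edge w

/-- A finite (maximal) play from `v`: a walk whose last element is a dead end. -/
def IsFinitePlay (v : P) (w : List P) : Prop :=
  A.IsWalkFrom v w ∧ ∀ u, w.getLast? = some u → A.DeadEnd u

/-- An infinite play from `v`. -/
def IsInfPlay (v : P) (f : ℕ → P) : Prop :=
  f 0 = v ∧ ∀ n, A.edge (f n) (f (n + 1))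

/-- A strategy (a function from histories to positions) of player `pl` is
legal if it always prescribes a move along an edge whenever a move exists. -/
def LegalFor (pl : Player) (v : P) (σ : List P → P) : Prop :=
  ∀ w u, A.IsWalkFrom v w → w.getLast? = some u → A.turn u = pl →
    (∃ x, A.edge u x) → A.edge u (σ w)

/-- The strategy `σ` of player `pl` is followed in the finite play `w`. -/
def FollowsFin (pl : Player) (σ : List P → P) (w : List P) : Prop :=
  ∀ q u x, (q ++ [x]) <+: w → q.getLast? = some u → A.turn u = pl → x = σ q

/-- The strategy `σ` of player `pl` is followed in the infinite play `f`. -/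
def FollowsInf (pl : Player) (σ : List P → P) (f : ℕ → P) : Prop :=
  ∀ n, A.turn (f n) = pl →
    f (n + 1) = σ (List.ofFn fun i : Fin (n + 1) => f i)

/-- `σ` is a winning strategy of player `pl` from `v`: it is legal, every
finite maximal play following it ends in a dead end won by `pl`, and no
infinite play follows it (infinite plays are won by neither player). -/
def WinningStrategy (pl : Player) (v : P) (σ : List P → P) : Prop :=
  A.LegalFor pl v σ ∧
  (∀ w, A.IsFinitePlay v w → A.FollowsFin pl σ w →
      ∃ u, w.getLast? = some u ∧ A.win u pl) ∧
  (∀ f, A.IsInfPlay v f → ¬ A.FollowsInf pl σ f)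

def HasWinningStrategy (pl : Player) (v : P) : Prop :=
  ∃ σ : List P → P, A.WinningStrategy pl v σ

end GameArena

/-- A positional strategy: its moves depend only on the current position. -/
def Positional {P : Type u} (σ : List P → P) : Prop :=
  ∀ q q' : List P, q.getLast? = q'.getLast? → σ q = σ q'

/-! ## Syntax of SCL / BndSCL -/

/-- A purely relational vocabulary. -/
structure Vocab : Type 1 where
  Rel : Type
  arity : Rel → ℕ

/-- Formulas of SCL / BndSCL over the vocabulary `V`.  Variables and label
symbols are natural numbers; `claim L` is the claim symbol `C_L` and
`lab L φ` is the labelled formula `L φ`. -/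
inductive SCLFormula (V : Vocab) : Type
  | bot : SCLFormula V
  | eq (x y : ℕ) : SCLFormula V
  | rel (R : V.Rel) (args : Fin (V.arity R) → ℕ) : SCLFormula V
  | claim (L : ℕ) : SCLFormula V
  | not (φ : SCLFormula V) : SCLFormula V
  | and (φ ψ : SCLFormula V) : SCLFormula V
  | or (φ ψ : SCLFormula V) : SCLFormula V
  | ex (x : ℕ) (φ : SCLFormula V) : SCLFormula V
  | all (x : ℕ) (φ : SCLFormula V) : SCLFormula V
  | lab (L : ℕ) (φ : SCLFormula V) : SCLFormula V

namespace SCLFormula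

variable {V : Vocab}

/-- First-order atoms. -/
def IsFOAtom : SCLFormula V → Prop
  | .bot => True
  | .eq _ _ => True
  | .rel _ _ => True
  | _ => False

/-- Purely first-order formulas (no claim symbols, no label symbols). -/
def IsFO : SCLFormula V → Prop
  | .bot => True
  | .eq _ _ => True
  | .rel _ _ => True
  | .claim _ => False
  | .not φ => IsFO φ
  | .and φ ψ => IsFO φ ∧ IsFO ψ
  | .or φ ψ => IsFO φ ∧ IsFO ψ
  | .ex _ φ => IsFO φ
  | .all _ φ => IsFO φ
  | .lab _ _ => False

/-- Free (individual) variables. -/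
def freeVars : SCLFormula V → Finset ℕ
  | .bot => ∅
  | .eq x y => {x, y}
  | .rel _ a => Finset.image a Finset.univ
  | .claim _ => ∅
  | .not φ => freeVars φ
  | .and φ ψ => freeVars φ ∪ freeVars ψ
  | .or φ ψ => freeVars φ ∪ freeVars ψ
  | .ex x φ => freeVars φ \ {x}
  | .all x φ => freeVars φ \ {x}
  | .lab _ φ => freeVars φ

/-- All variables occurring in a formula (free or bound). -/
def vars : SCLFormula V → Finset ℕ
  | .bot => ∅
  | .eq x y => {x, y}
  | .rel _ a => Finset.image a Finset.univ
  | .claim _ => ∅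
  | .not φ => vars φ
  | .and φ ψ => vars φ ∪ vars ψ
  | .or φ ψ => vars φ ∪ vars ψ
  | .ex x φ => insert x (vars φ)
  | .all x φ => insert x (vars φ)
  | .lab _ φ => vars φ

/-- Sentences: formulas with no free variables. -/
def IsSentence (φ : SCLFormula V) : Prop := freeVars φ = ∅

end SCLFormula

/-! ## Structures and first-order (Tarski) satisfaction -/

/-- A (suitable) model for vocabulary `V`: a nonempty domain together with an
interpretation of all relation symbols. -/
structure Struct (V : Vocab) where
  Dom : Type u
  dom_nonempty : Nonempty Dom
  interp : ∀ R : V.Rel, (Fin (V.arity R) → Dom) → Prop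

attribute [instance] Struct.dom_nonempty

/-- Satisfaction of atoms (false on non-atoms). -/
def atomSat {V : Vocab} (M : Struct.{u} V) (s : ℕ → M.Dom) : SCLFormula V → Prop
  | .bot => False
  | .eq x y => s x = s y
  | .rel R a => M.interp R fun i => s (a i)
  | _ => False

/-- Standard (Tarski) first-order satisfaction.  It is only meaningful on
purely first-order formulas; claim symbols are interpreted as `False` and
label symbols are ignored. -/
def FOSat {V : Vocab} (M : Struct.{u} V) : (ℕ → M.Dom) → SCLFormula V → Prop
  | _, .bot => False
  | s, .eq x y => s x = s y
  | s, .rel R a => M.interp R fun i => s (a i)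
  | _, .claim _ => False
  | s, .not φ => ¬ FOSat M s φ
  | s, .and φ ψ => FOSat M s φ ∧ FOSat M s ψ
  | s, .or φ ψ => FOSat M s φ ∨ FOSat M s ψ
  | s, .ex x φ => ∃ a : M.Dom, FOSat M (Function.update s x a) φ
  | s, .all x φ => ∀ a : M.Dom, FOSat M (Function.update s x a) φ
  | s, .lab _ φ => FOSat M s φ

/-! ## The evaluation games -/

/-- A position of the semantic game: the current formula, the environment
recording for each label symbol `L` the reference formula `L ψ` it currently
names, the current assignment, and the polarity (`true` = `+`). -/
structure SCLPos (V : Vocab) (D : Type u) : Type u where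
  form : SCLFormula V
  env : ℕ → Option (SCLFormula V)
  asg : ℕ → D
  pol : Bool

/-- Which player moves at a given position. (At positions with at most one
successor the owner is irrelevant; we let Eloise own them.) -/
def posTurn {V : Vocab} {D : Type u} (p : SCLPos V D) : Player :=
  match p.form, p.pol with
  | .and _ _, true => .abelard
  | .and _ _, false => .eloise
  | .or _ _, true => .eloise
  | .or _ _, false => .abelard
  | .all _ _, true => .abelard
  | .all _ _, false => .eloise
  | .ex _ _, true => .eloise
  | .ex _ _, false => .abelard
  | _, _ => .eloise

/-- Who wins a play ending at a given position: at an FO-atom position,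
Eloise wins iff the atom's truth value agrees with the polarity, and Abelard
wins otherwise; plays ending anywhere else (e.g. at a claim symbol with no
reference formula, or with clock value 0) are won by neither player. -/
def posWin {V : Vocab} (M : Struct.{u} V) (p : SCLPos V M.Dom) : Player → Prop
  | .eloise => p.form.IsFOAtom ∧ (atomSat M p.asg p.form ↔ p.pol = true)
  | .abelard => p.form.IsFOAtom ∧ ¬ (atomSat M p.asg p.form ↔ p.pol = true)

/-- Moves of the unbounded evaluation game `G_∞`. -/
inductive UStep {V : Vocab} (M : Struct.{u} V) :
    SCLPos V M.Dom → SCLPos V M.Dom → Prop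
  | neg (φ : SCLFormula V) (e : ℕ → Option (SCLFormula V)) (s : ℕ → M.Dom) (b : Bool) :
      UStep M ⟨.not φ, e, s, b⟩ ⟨φ, e, s, !b⟩
  | andLeft (φ ψ : SCLFormula V) (e : ℕ → Option (SCLFormula V)) (s : ℕ → M.Dom) (b : Bool) :
      UStep M ⟨.and φ ψ, e, s, b⟩ ⟨φ, e, s, b⟩
  | andRight (φ ψ : SCLFormula V) (e : ℕ → Option (SCLFormula V)) (s : ℕ → M.Dom) (b : Bool) :
      UStep M ⟨.and φ ψ, e, s, b⟩ ⟨ψ, e, s, b⟩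
  | orLeft (φ ψ : SCLFormula V) (e : ℕ → Option (SCLFormula V)) (s : ℕ → M.Dom) (b : Bool) :
      UStep M ⟨.or φ ψ, e, s, b⟩ ⟨φ, e, s, b⟩
  | orRight (φ ψ : SCLFormula V) (e : ℕ → Option (SCLFormula V)) (s : ℕ → M.Dom) (b : Bool) :
      UStep M ⟨.or φ ψ, e, s, b⟩ ⟨ψ, e, s, b⟩
  | exStep (x : ℕ) (φ : SCLFormula V) (e : ℕ → Option (SCLFormula V)) (s : ℕ → M.Dom)
      (b : Bool) (a : M.Dom) :
      UStep M ⟨.ex x φ, e, s, b⟩ ⟨φ, e, Function.update s x a, b⟩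
  | allStep (x : ℕ) (φ : SCLFormula V) (e : ℕ → Option (SCLFormula V)) (s : ℕ → M.Dom)
      (b : Bool) (a : M.Dom) :
      UStep M ⟨.all x φ, e, s, b⟩ ⟨φ, e, Function.update s x a, b⟩
  | labStep (L : ℕ) (φ : SCLFormula V) (e : ℕ → Option (SCLFormula V)) (s : ℕ → M.Dom)
      (b : Bool) :
      UStep M ⟨.lab L φ, e, s, b⟩ ⟨φ, Function.update e L (some (.lab L φ)), s, b⟩
  | claimStep (L : ℕ) (e : ℕ → Option (SCLFormula V)) (s : ℕ → M.Dom) (b : Bool)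
      (χ : SCLFormula V) (h : e L = some χ) :
      UStep M ⟨.claim L, e, s, b⟩ ⟨χ, e, s, b⟩

/-- Moves of the `n`-bounded evaluation game: positions additionally carry a
clock value, which decreases by one exactly at jumps from a claim symbol to
its reference formula; a claim-symbol position with clock value `0` is a dead
end won by neither player. -/
inductive BStep {V : Vocab} (M : Struct.{u} V) :
    SCLPos V M.Dom × ℕ → SCLPos V M.Dom × ℕ → Prop
  | neg (φ : SCLFormula V) (e : ℕ → Option (SCLFormula V)) (s : ℕ → M.Dom) (b : Bool) (n : ℕ) :
      BStep M (⟨.not φ, e, s, b⟩, n) (⟨φ, e, s, !b⟩, n)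
  | andLeft (φ ψ : SCLFormula V) (e : ℕ → Option (SCLFormula V)) (s : ℕ → M.Dom) (b : Bool)
      (n : ℕ) : BStep M (⟨.and φ ψ, e, s, b⟩, n) (⟨φ, e, s, b⟩, n)
  | andRight (φ ψ : SCLFormula V) (e : ℕ → Option (SCLFormula V)) (s : ℕ → M.Dom) (b : Bool)
      (n : ℕ) : BStep M (⟨.and φ ψ, e, s, b⟩, n) (⟨ψ, e, s, b⟩, n)
  | orLeft (φ ψ : SCLFormula V) (e : ℕ → Option (SCLFormula V)) (s : ℕ → M.Dom) (b : Bool)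
      (n : ℕ) : BStep M (⟨.or φ ψ, e, s, b⟩, n) (⟨φ, e, s, b⟩, n)
  | orRight (φ ψ : SCLFormula V) (e : ℕ → Option (SCLFormula V)) (s : ℕ → M.Dom) (b : Bool)
      (n : ℕ) : BStep M (⟨.or φ ψ, e, s, b⟩, n) (⟨ψ, e, s, b⟩, n)
  | exStep (x : ℕ) (φ : SCLFormula V) (e : ℕ → Option (SCLFormula V)) (s : ℕ → M.Dom)
      (b : Bool) (n : ℕ) (a : M.Dom) :
      BStep M (⟨.ex x φ, e, s, b⟩, n) (⟨φ, e, Function.update s x a, b⟩, n)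
  | allStep (x : ℕ) (φ : SCLFormula V) (e : ℕ → Option (SCLFormula V)) (s : ℕ → M.Dom)
      (b : Bool) (n : ℕ) (a : M.Dom) :
      BStep M (⟨.all x φ, e, s, b⟩, n) (⟨φ, e, Function.update s x a, b⟩, n)
  | labStep (L : ℕ) (φ : SCLFormula V) (e : ℕ → Option (SCLFormula V)) (s : ℕ → M.Dom)
      (b : Bool) (n : ℕ) :
      BStep M (⟨.lab L φ, e, s, b⟩, n) (⟨φ, Function.update e L (some (.lab L φ)), s, b⟩, n)
  | claimStep (L : ℕ) (e : ℕ → Option (SCLFormula V)) (s : ℕ → M.Dom) (b : Bool)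
      (χ : SCLFormula V) (n : ℕ) (h : e L = some χ) :
      BStep M (⟨.claim L, e, s, b⟩, n + 1) (⟨χ, e, s, b⟩, n)

/-- The unbounded evaluation game `G_∞(𝔄, ·, ·)` as a game arena. -/
def gameU {V : Vocab} (M : Struct.{u} V) : GameArena (SCLPos V M.Dom) where
  turn := posTurn
  edge := UStep M
  win := posWin M

/-- The bounded evaluation games `G_n(𝔄, ·, ·)` (for all clock values `n`
simultaneously) as a game arena. -/
def gameB {V : Vocab} (M : Struct.{u} V) : GameArena (SCLPos V M.Dom × ℕ) where
  turn p := posTurn p.1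
  edge := BStep M
  win p := posWin M p.1

/-- The initial position of the evaluation game for `φ` under assignment `s`:
empty environment and positive polarity. -/
def initPos {V : Vocab} {D : Type u} (φ : SCLFormula V) (s : ℕ → D) : SCLPos V D :=
  ⟨φ, fun _ => none, s, true⟩

/-- Truth under the unbounded semantics (the logic SCL):
`𝔄,s ⊨ φ` iff Eloise has a winning strategy in `G_∞(𝔄,s,φ)`. -/
def SCLTrue {V : Vocab} (M : Struct.{u} V) (s : ℕ → M.Dom) (φ : SCLFormula V) : Prop :=
  (gameU M).HasWinningStrategy .eloise (initPos φ s)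

/-! ### The bounded game `G_ω` -/

/-- Positions of the game `G_ω`: the initial position (where Abelard picks a
number `n'`), the intermediate positions (where Eloise picks some `n ≥ n'`),
and the positions of the `n`-bounded games. -/
inductive GOPos (V : Vocab) (D : Type u) : Type u
  | start : GOPos V D
  | mid (n' : ℕ) : GOPos V D
  | inner (p : SCLPos V D) (clock : ℕ) : GOPos V D

inductive GOStep {V : Vocab} (M : Struct.{u} V) (φ : SCLFormula V) (s : ℕ → M.Dom) :
    GOPos V M.Dom → GOPos V M.Dom → Prop
  | abelardPick (n' : ℕ) : GOStep M φ s .start (.mid n')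
  | eloisePick (n' n : ℕ) (h : n' ≤ n) : GOStep M φ s (.mid n') (.inner (initPos φ s) n)
  | play (p q : SCLPos V M.Dom) (m k : ℕ) (h : BStep M (p, m) (q, k)) :
      GOStep M φ s (.inner p m) (.inner q k)

def goTurn {V : Vocab} {D : Type u} : GOPos V D → Player
  | .start => .abelard
  | .mid _ => .eloise
  | .inner p _ => posTurn p

def goWin {V : Vocab} (M : Struct.{u} V) : GOPos V M.Dom → Player → Prop
  | .inner p _, pl => posWin M p pl
  | _, _ => False

/-- The bounded evaluation game `G_ω(𝔄,s,φ)`: Abelard picks `n' ∈ ℕ`, then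
Eloise picks `n ≥ n'`, and then `G_n(𝔄,s,φ)` is played. -/
def gameOmega {V : Vocab} (M : Struct.{u} V) (φ : SCLFormula V) (s : ℕ → M.Dom) :
    GameArena (GOPos V M.Dom) where
  turn := goTurn
  edge := GOStep M φ s
  win := goWin M

/-- Truth under the bounded semantics (the logic BndSCL):
`𝔄,s ⊨_ω φ` iff Eloise has a winning strategy in `G_ω(𝔄,s,φ)`. -/
def BndTrue {V : Vocab} (M : Struct.{u} V) (s : ℕ → M.Dom) (φ : SCLFormula V) : Prop :=
  (gameOmega M φ s).HasWinningStrategy .eloise .start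

/-! ## Approximants -/

/-- Auxiliary structural recursion for approximants: `k` tells what to put in
place of a claim symbol.  Label symbols are deleted (while updating the
environment), and polarity is tracked through negations. -/
def approxCore {V : Vocab}
    (k : (ℕ → Option (SCLFormula V)) → Bool → ℕ → SCLFormula V) :
    (ℕ → Option (SCLFormula V)) → Bool → SCLFormula V → SCLFormula V
  | _, _, .bot => .bot
  | _, _, .eq x y => .eq x y
  | _, _, .rel R a => .rel R a
  | e, b, .claim L => k e b L
  | e, b, .not φ => .not (approxCore k e (!b) φ)
  | e, b, .and φ ψ => .and (approxCore k e b φ) (approxCore k e b ψ)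
  | e, b, .or φ ψ => .or (approxCore k e b φ) (approxCore k e b ψ)
  | e, b, .ex x φ => .ex x (approxCore k e b φ)
  | e, b, .all x φ => .all x (approxCore k e b φ)
  | e, b, .lab L φ => approxCore k (Function.update e L (some (.lab L φ))) b φ

/-- `approx n e b φ` unfolds each claim symbol of `φ` (in environment `e`,
under polarity `b`) through `n` jumps to reference formulas; claim symbols
reached with exhausted budget (or with no reference formula) are replaced by
`⊥` at positive occurrences and `⊤` (i.e. `¬⊥`) at negative occurrences, and
all label symbols are deleted. -/
def approx {V : Vocab} : ℕ → (ℕ → Option (SCLFormula V)) → Bool → SCLFormula V → SCLFormula V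
  | 0 => approxCore fun _ b _ => if b then .bot else .not .bot
  | n + 1 => approxCore fun e b L =>
      match e L with
      | some χ => approx n e b χ
      | none => if b then .bot else .not .bot

/-- The `n`-th approximant `Φⁿ_φ` of `φ`: the first-order formula obtained
from the `n`-th unfolding of `φ` by deleting all label symbols and replacing
positive claim occurrences by `⊥` and negative ones by `⊤`. -/
def approximant {V : Vocab} (φ : SCLFormula V) (n : ℕ) : SCLFormula V :=
  approx n (fun _ => none) true φ

/-- Validity under bounded semantics: true in every suitable model under
every suitable assignment. -/
def BndValid {V : Vocab} (φ : SCLFormula V) : Prop :=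
  ∀ (M : Struct.{u} V) (s : ℕ → M.Dom), BndTrue M s φ

/-- Validity under unbounded semantics. -/
def SCLValid {V : Vocab} (φ : SCLFormula V) : Prop :=
  ∀ (M : Struct.{u} V) (s : ℕ → M.Dom), SCLTrue M s φ

/-- First-order validity. -/
def FOValid {V : Vocab} (φ : SCLFormula V) : Prop :=
  ∀ (M : Struct.{u} V) (s : ℕ → M.Dom), FOSat M s φ



set_option autoImplicit false
open SCLFormula

variable {V : Vocab}

theorem approx_bot (n : ℕ) (e : ℕ → Option (SCLFormula V)) (b : Bool) :
    approx n e b (.bot : SCLFormula V) = .bot := by cases n <;> rfl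

theorem approx_eq (n : ℕ) (e : ℕ → Option (SCLFormula V)) (b : Bool) (x y : ℕ) :
    approx n e b (.eq x y : SCLFormula V) = .eq x y := by cases n <;> rfl

theorem approx_rel (n : ℕ) (e : ℕ → Option (SCLFormula V)) (b : Bool) (R : V.Rel)
    (a : Fin (V.arity R) → ℕ) : approx n e b (.rel R a) = .rel R a := by cases n <;> rfl

theorem approx_not (n : ℕ) (e : ℕ → Option (SCLFormula V)) (b : Bool) (φ : SCLFormula V) :
    approx n e b (.not φ) = .not (approx n e (!b) φ) := by cases n <;> rfl

theorem approx_and (n : ℕ) (e : ℕ → Option (SCLFormula V)) (b : Bool) (φ ψ : SCLFormula V) :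
    approx n e b (.and φ ψ) = .and (approx n e b φ) (approx n e b ψ) := by cases n <;> rfl

theorem approx_or (n : ℕ) (e : ℕ → Option (SCLFormula V)) (b : Bool) (φ ψ : SCLFormula V) :
    approx n e b (.or φ ψ) = .or (approx n e b φ) (approx n e b ψ) := by cases n <;> rfl

theorem approx_ex (n : ℕ) (e : ℕ → Option (SCLFormula V)) (b : Bool) (x : ℕ) (φ : SCLFormula V) :
    approx n e b (.ex x φ) = .ex x (approx n e b φ) := by cases n <;> rfl

theorem approx_all (n : ℕ) (e : ℕ → Option (SCLFormula V)) (b : Bool) (x : ℕ) (φ : SCLFormula V) :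
    approx n e b (.all x φ) = .all x (approx n e b φ) := by cases n <;> rfl

theorem approx_lab (n : ℕ) (e : ℕ → Option (SCLFormula V)) (b : Bool) (L : ℕ) (φ : SCLFormula V) :
    approx n e b (.lab L φ) = approx n (Function.update e L (some (.lab L φ))) b φ := by
  cases n <;> rfl

theorem approx_claim_zero (e : ℕ → Option (SCLFormula V)) (b : Bool) (L : ℕ) :
    approx 0 e b (.claim L : SCLFormula V) = if b then .bot else .not .bot := rfl

theorem approx_claim_succ (n : ℕ) (e : ℕ → Option (SCLFormula V)) (b : Bool) (L : ℕ) :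
    approx (n+1) e b (.claim L : SCLFormula V) =
      match e L with
      | some χ => approx n e b χ
      | none => if b then .bot else .not .bot := rfl

theorem approx_claim_succ_some (n : ℕ) (e : ℕ → Option (SCLFormula V)) (b : Bool) (L : ℕ)
    (χ : SCLFormula V) (h : e L = some χ) :
    approx (n+1) e b (.claim L : SCLFormula V) = approx n e b χ := by
  rw [approx_claim_succ, h]

theorem approx_claim_succ_none (n : ℕ) (e : ℕ → Option (SCLFormula V)) (b : Bool) (L : ℕ)
    (h : e L = none) :
    approx (n+1) e b (.claim L : SCLFormula V) = if b then .bot else .not .bot := by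
  rw [approx_claim_succ, h]

theorem approx_mono (M : Struct.{u} V) :
    ∀ (n : ℕ) (ψ : SCLFormula V) (e : ℕ → Option (SCLFormula V)) (s : ℕ → M.Dom),
      (FOSat M s (approx n e true ψ) → FOSat M s (approx (n+1) e true ψ)) ∧
      (FOSat M s (approx (n+1) e false ψ) → FOSat M s (approx n e false ψ)) := by
  intro n
  induction n with
  | zero =>
    intro ψ
    induction ψ with
    | bot => intro e s; simp [approx_bot]
    | eq x y => intro e s; simp [approx_eq]
    | rel R a => intro e s; simp [approx_rel]
    | claim L =>
      intro e s
      constructor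
      · intro h; rw [approx_claim_zero] at h; simp [FOSat] at h
      · intro _; rw [approx_claim_zero]; simp [FOSat]
    | not φ ih =>
      intro e s
      simp only [approx_not, FOSat, Bool.not_true, Bool.not_false]
      exact ⟨fun h hc => h ((ih e s).2 hc), fun h hc => h ((ih e s).1 hc)⟩
    | and φ ψ ihφ ihψ =>
      intro e s
      simp only [approx_and, FOSat]
      exact ⟨fun h => ⟨(ihφ e s).1 h.1, (ihψ e s).1 h.2⟩,
             fun h => ⟨(ihφ e s).2 h.1, (ihψ e s).2 h.2⟩⟩
    | or φ ψ ihφ ihψ =>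
      intro e s
      simp only [approx_or, FOSat]
      exact ⟨fun h => h.elim (fun h => .inl ((ihφ e s).1 h)) (fun h => .inr ((ihψ e s).1 h)),
             fun h => h.elim (fun h => .inl ((ihφ e s).2 h)) (fun h => .inr ((ihψ e s).2 h))⟩
    | ex x φ ih =>
      intro e s
      simp only [approx_ex, FOSat]
      exact ⟨fun ⟨a, h⟩ => ⟨a, (ih e _).1 h⟩, fun ⟨a, h⟩ => ⟨a, (ih e _).2 h⟩⟩
    | all x φ ih =>
      intro e s
      simp only [approx_all, FOSat]
      exact ⟨fun h a => (ih e _).1 (h a), fun h a => (ih e _).2 (h a)⟩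
    | lab L φ ih =>
      intro e s
      simp only [approx_lab]
      exact ih _ s
  | succ n ihn =>
    intro ψ
    induction ψ with
    | bot => intro e s; simp [approx_bot]
    | eq x y => intro e s; simp [approx_eq]
    | rel R a => intro e s; simp [approx_rel]
    | claim L =>
      intro e s
      cases he : e L with
      | none =>
        simp only [approx_claim_succ, he]
        exact ⟨id, id⟩
      | some χ =>
        simp only [approx_claim_succ, he]
        exact ihn χ e s
    | not φ ih =>
      intro e s
      simp only [approx_not, FOSat, Bool.not_true, Bool.not_false]
      exact ⟨fun h hc => h ((ih e s).2 hc), fun h hc => h ((ih e s).1 hc)⟩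
    | and φ ψ ihφ ihψ =>
      intro e s
      simp only [approx_and, FOSat]
      exact ⟨fun h => ⟨(ihφ e s).1 h.1, (ihψ e s).1 h.2⟩,
             fun h => ⟨(ihφ e s).2 h.1, (ihψ e s).2 h.2⟩⟩
    | or φ ψ ihφ ihψ =>
      intro e s
      simp only [approx_or, FOSat]
      exact ⟨fun h => h.elim (fun h => .inl ((ihφ e s).1 h)) (fun h => .inr ((ihψ e s).1 h)),
             fun h => h.elim (fun h => .inl ((ihφ e s).2 h)) (fun h => .inr ((ihψ e s).2 h))⟩
    | ex x φ ih =>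
      intro e s
      simp only [approx_ex, FOSat]
      exact ⟨fun ⟨a, h⟩ => ⟨a, (ih e _).1 h⟩, fun ⟨a, h⟩ => ⟨a, (ih e _).2 h⟩⟩
    | all x φ ih =>
      intro e s
      simp only [approx_all, FOSat]
      exact ⟨fun h a => (ih e _).1 (h a), fun h a => (ih e _).2 (h a)⟩
    | lab L φ ih =>
      intro e s
      simp only [approx_lab]
      exact ih _ s

theorem approx_mono_le (M : Struct.{u} V) {m n : ℕ} (h : m ≤ n) (ψ : SCLFormula V)
    (e : ℕ → Option (SCLFormula V)) (s : ℕ → M.Dom) :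
    FOSat M s (approx m e true ψ) → FOSat M s (approx n e true ψ) := by
  induction h with
  | refl => exact id
  | step h ih => exact fun hs => (approx_mono M _ ψ e s).1 (ih hs)


set_option autoImplicit false

theorem getLast?_cons_of_ne {α : Type u} (a : α) {w : List α} (hw : w ≠ []) :
    (a :: w).getLast? = w.getLast? := by
  cases w with
  | nil => exact absurd rfl hw
  | cons b t => exact List.getLast?_cons_cons

namespace GameArena

variable {P : Type u} (A : GameArena P)

theorem win_of_deadEnd {pl : Player} {v : P} {σ : List P → P}
    (h : A.WinningStrategy pl v σ) (hd : A.DeadEnd v) : A.win v pl := by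
  have hplay : A.IsFinitePlay v [v] := by
    refine ⟨⟨rfl, List.isChain_singleton v⟩, ?_⟩
    intro u hu
    simp only [List.getLast?_singleton, Option.some.injEq] at hu
    subst hu; exact hd
  have hfol : A.FollowsFin pl σ [v] := by
    intro q u x hpre hlast _
    have hlen := hpre.length_le
    have : q = [] := by
      cases q with
      | nil => rfl
      | cons a t => simp at hlen
    subst this; simp at hlast
  obtain ⟨u, hu, hw⟩ := h.2.1 [v] hplay hfol
  simp only [List.getLast?_singleton, Option.some.injEq] at hu
  subst hu; exact hw

theorem edge_root {pl : Player} {v : P} {σ : List P → P}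
    (h : A.WinningStrategy pl v σ) (hturn : A.turn v = pl) (hex : ∃ x, A.edge v x) :
    A.edge v (σ [v]) :=
  h.1 [v] v ⟨rfl, List.isChain_singleton v⟩ (by simp) hturn hex

theorem ws_step {pl : Player} {v x : P} {σ : List P → P}
    (h : A.WinningStrategy pl v σ) (hvx : A.edge v x) (hmv : A.turn v = pl → x = σ [v]) :
    A.WinningStrategy pl x (fun w => σ (v :: w)) := by
  have hwalk : ∀ w, A.IsWalkFrom x w → A.IsWalkFrom v (v :: w) := by
    intro w hw
    refine ⟨rfl, List.isChain_cons.2 ⟨?_, hw.2⟩⟩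
    intro y hy
    rw [hw.1] at hy
    simp only [Option.mem_def, Option.some.injEq] at hy
    subst hy; exact hvx
  refine ⟨?_, ?_, ?_⟩
  · intro w u hw hlast hturn hex
    have hne : w ≠ [] := by rintro rfl; simp at hlast
    exact h.1 (v :: w) u (hwalk w hw) (by rw [getLast?_cons_of_ne v hne]; exact hlast) hturn hex
  · intro w hwp hfol
    have hne : w ≠ [] := by
      rintro rfl
      have := hwp.1.1
      simp at this
    have hfol' : A.FollowsFin pl σ (v :: w) := by
      intro q u y hpre hlast hturn
      cases q with
      | nil => simp at hlast
      | cons a q' =>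
        rw [List.cons_append] at hpre
        obtain ⟨rfl, hpre'⟩ := List.cons_prefix_cons.1 hpre
        cases q' with
        | nil =>
          simp only [List.getLast?_singleton, Option.some.injEq] at hlast
          have hy : y = x := by
            obtain ⟨t, ht⟩ := hpre'
            have h2 := hwp.1.1
            rw [← ht] at h2
            simp at h2
            exact h2
          subst hlast
          rw [hy]
          exact hmv hturn
        | cons b q'' =>
          have hlast' : (b :: q'').getLast? = some u := by
            rw [getLast?_cons_of_ne a (by simp)] at hlast; exact hlast
          exact hfol (b :: q'') u y hpre' hlast' hturn
    have hplay' : A.IsFinitePlay v (v :: w) := by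
      refine ⟨hwalk w hwp.1, ?_⟩
      intro u hu
      rw [getLast?_cons_of_ne v hne] at hu
      exact hwp.2 u hu
    obtain ⟨u, hu, hwin⟩ := h.2.1 (v :: w) hplay' hfol'
    rw [getLast?_cons_of_ne v hne] at hu
    exact ⟨u, hu, hwin⟩
  · intro f hf hfolinf
    apply h.2.2 (fun n => Nat.casesOn n v f)
    · refine ⟨rfl, ?_⟩
      intro n
      cases n with
      | zero =>
        show A.edge v (f 0)
        rw [hf.1]
        exact hvx
      | succ n => exact hf.2 n
    · intro n hturn
      cases n with
      | zero =>
        have hlist : List.ofFn (fun i : Fin 1 => (Nat.casesOn (i : ℕ) v f : P)) = [v] := by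
          simp [List.ofFn_succ]
        show f 0 = _
        rw [hlist, hf.1]
        exact hmv hturn
      | succ n =>
        have hlist : List.ofFn (fun i : Fin (n + 1 + 1) => (Nat.casesOn (i : ℕ) v f : P))
            = v :: List.ofFn (fun i : Fin (n + 1) => f i) := by
          rw [List.ofFn_succ]
          congr 1
        show f (n + 1) = _
        rw [hlist]
        exact hfolinf n hturn

theorem winning_of_invariant (I : P → Prop)
    (hnoinf : ∀ (v : P) (f : ℕ → P), ¬ A.IsInfPlay v f)
    (hdead : ∀ v, I v → A.DeadEnd v → A.win v .eloise)
    (hel : ∀ v, I v → A.turn v = .eloise → (∃ x, A.edge v x) → ∃ x, A.edge v x ∧ I x)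
    (hab : ∀ v x, I v → A.turn v ≠ .eloise → A.edge v x → I x)
    (v₀ : P) (h0 : I v₀) : A.HasWinningStrategy .eloise v₀ := by
  classical
  set mv : P → P := fun u =>
    if h : ∃ x, A.edge u x ∧ I x then h.choose
    else if h' : ∃ x, A.edge u x then h'.choose else u with hmv_def
  set σ : List P → P := fun w => (w.getLast?).elim v₀ mv with hσ_def
  have hσ_last : ∀ (w : List P) (u : P), w.getLast? = some u → σ w = mv u := by
    intro w u hu
    simp [hσ_def, hu]
  have hmv_edge : ∀ u, (∃ x, A.edge u x) → A.edge u (mv u) := by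
    intro u hex
    by_cases h : ∃ x, A.edge u x ∧ I x
    · simp only [hmv_def, dif_pos h]; exact h.choose_spec.1
    · simp only [hmv_def, dif_neg h, dif_pos hex]; exact hex.choose_spec
  have hmv_good : ∀ u, I u → A.turn u = .eloise → (∃ x, A.edge u x) →
      A.edge u (mv u) ∧ I (mv u) := by
    intro u hIu hturn hex
    have h : ∃ x, A.edge u x ∧ I x := hel u hIu hturn hex
    simp only [hmv_def, dif_pos h]
    exact h.choose_spec
  have hinv : ∀ w, A.IsWalkFrom v₀ w → A.FollowsFin .eloise σ w → ∀ u ∈ w, I u := by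
    intro w
    induction w using List.reverseRecOn with
    | nil => intro hw; exact absurd hw.1 (by simp)
    | append_singleton q x ih =>
      intro hw hfol
      rcases eq_or_ne q [] with rfl | hqne
      · intro u hu
        simp only [List.nil_append, List.mem_singleton] at hu
        have hx : x = v₀ := by
          have := hw.1
          simpa using this
        rw [hu, hx]
        exact h0
      · -- decompose the walk
        obtain ⟨u, hu⟩ : ∃ u, q.getLast? = some u := by
          cases hq : q.getLast? with
          | none => exact absurd (List.getLast?_eq_none_iff.1 hq) hqne
          | some u => exact ⟨u, rfl⟩
        have hchain := List.isChain_append.1 hw.2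
        have hedge : A.edge u x := by
          refine hchain.2.2 u ?_ x ?_ <;> simp [hu]
        have hwq : A.IsWalkFrom v₀ q := by
          refine ⟨?_, hchain.1⟩
          rw [← hw.1]
          cases q with
          | nil => exact absurd rfl hqne
          | cons a t => simp
        have hfolq : A.FollowsFin .eloise σ q := by
          intro q' u' y hpre hlast hturn
          exact hfol q' u' y (hpre.trans (q.prefix_append [x])) hlast hturn
        have hIq := ih hwq hfolq
        have hIu : I u := hIq u (List.mem_of_getLast? hu)
        have hIx : I x := by
          by_cases hturn : A.turn u = .eloise
          · have hx : x = σ q := hfol q u x (List.prefix_refl _) hu hturn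
            rw [hσ_last q u hu] at hx
            have := (hmv_good u hIu hturn ⟨x, hedge⟩).2
            rwa [← hx] at this
          · exact hab u x hIu hturn hedge
        intro u' hu'
        rcases List.mem_append.1 hu' with h' | h'
        · exact hIq u' h'
        · simp only [List.mem_singleton] at h'
          subst h'; exact hIx
  refine ⟨σ, ?_, ?_, ?_⟩
  · intro w u hw hlast hturn hex
    rw [hσ_last w u hlast]
    exact hmv_edge u hex
  · intro w hwp hfol
    have hne : w ≠ [] := by
      rintro rfl
      have := hwp.1.1
      simp at this
    obtain ⟨u, hu⟩ : ∃ u, w.getLast? = some u := by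
      cases hq : w.getLast? with
      | none => exact absurd (List.getLast?_eq_none_iff.1 hq) hne
      | some u => exact ⟨u, rfl⟩
    have hIu : I u := hinv w hwp.1 hfol u (List.mem_of_getLast? hu)
    exact ⟨u, hu, hdead u hIu (hwp.2 u hu)⟩
  · exact fun f hf _ => hnoinf v₀ f hf

end GameArena

theorem no_descending {α : Type u} {r : α → α → Prop} (wf : WellFounded r) (f : ℕ → α)
    (h : ∀ n, r (f (n + 1)) (f n)) : False := by
  have key : ∀ a, ∀ n, f n ≠ a := by
    intro a
    induction a using WellFounded.induction wf with
    | _ a ih =>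
      intro n hn
      exact ih (f (n + 1)) (hn ▸ h n) (n + 1) rfl
  exact key (f 0) 0 rfl


set_option autoImplicit false
open SCLFormula

variable {V : Vocab}

/-- Size of a formula. -/
def fsize : SCLFormula V → ℕ
  | .bot => 1
  | .eq _ _ => 1
  | .rel _ _ => 1
  | .claim _ => 1
  | .not φ => fsize φ + 1
  | .and φ ψ => fsize φ + fsize ψ + 1
  | .or φ ψ => fsize φ + fsize ψ + 1
  | .ex _ φ => fsize φ + 1
  | .all _ φ => fsize φ + 1
  | .lab _ φ => fsize φ + 1

theorem lexwf : WellFounded (Prod.Lex ((· < ·) : ℕ → ℕ → Prop) ((· < ·) : ℕ → ℕ → Prop)) :=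
  (Nat.lt_wfRel.wf).prod_lex (Nat.lt_wfRel.wf)

/-- The lexicographic measure on positions of the bounded game. -/
def bMeasure {M : Struct.{u} V} (a : SCLPos V M.Dom × ℕ) : ℕ × ℕ :=
  (a.2, fsize a.1.form)

theorem bstep_lex {M : Struct.{u} V} {a b : SCLPos V M.Dom × ℕ} (h : BStep M a b) :
    Prod.Lex ((· < ·) : ℕ → ℕ → Prop) ((· < ·) : ℕ → ℕ → Prop) (bMeasure b) (bMeasure a) := by
  cases h <;>
    first
      | exact Prod.Lex.left _ _ (Nat.lt_succ_self _)
      | exact Prod.Lex.right _ (by simp only [bMeasure, fsize]; omega)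

theorem gameB_noinf (M : Struct.{u} V) (v : SCLPos V M.Dom × ℕ) (f : ℕ → SCLPos V M.Dom × ℕ) :
    ¬ (gameB M).IsInfPlay v f := by
  rintro ⟨_, hs⟩
  exact no_descending (InvImage.wf bMeasure lexwf) f (fun n => bstep_lex (hs n))

/-- Eloise "wins" at position `p` with clock `n`, in terms of approximants. -/
def WinP (M : Struct.{u} V) (p : SCLPos V M.Dom) (n : ℕ) : Prop :=
  FOSat M p.asg (approx n p.env p.pol p.form) ↔ p.pol = true

theorem winP_of_posWin {M : Struct.{u} V} {p : SCLPos V M.Dom} (n : ℕ)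
    (h : posWin M p .eloise) : WinP M p n := by
  obtain ⟨ψ, e, s, b⟩ := p
  obtain ⟨hatom, hsat⟩ := h
  cases ψ <;> try exact hatom.elim
  · simpa only [WinP, approx_bot, FOSat, atomSat] using hsat
  · simpa only [WinP, approx_eq, FOSat, atomSat] using hsat
  · simpa only [WinP, approx_rel, FOSat, atomSat] using hsat

theorem winP_deadEnd {M : Struct.{u} V} {p : SCLPos V M.Dom} {n : ℕ}
    (hW : WinP M p n) (hd : ∀ q, ¬ BStep M (p, n) q) : posWin M p .eloise := by
  obtain ⟨ψ, e, s, b⟩ := p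
  simp only [WinP] at hW
  obtain ⟨a⟩ := M.dom_nonempty
  cases ψ with
  | bot =>
    refine ⟨trivial, ?_⟩
    rw [approx_bot] at hW
    exact hW
  | eq x y =>
    refine ⟨trivial, ?_⟩
    rw [approx_eq] at hW
    exact hW
  | rel R args =>
    refine ⟨trivial, ?_⟩
    rw [approx_rel] at hW
    exact hW
  | claim L =>
    exfalso
    cases n with
    | zero =>
      rw [approx_claim_zero] at hW
      cases b <;> simp [FOSat] at hW
    | succ k =>
      cases he : e L with
      | none =>
        rw [approx_claim_succ_none _ _ _ _ he] at hW
        cases b <;> simp [FOSat] at hW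
      | some χ => exact hd _ (BStep.claimStep L e s b χ k he)
  | not φ => exact (hd _ (BStep.neg φ e s b n)).elim
  | and φ ψ => exact (hd _ (BStep.andLeft φ ψ e s b n)).elim
  | or φ ψ => exact (hd _ (BStep.orLeft φ ψ e s b n)).elim
  | ex x φ => exact (hd _ (BStep.exStep x φ e s b n a)).elim
  | all x φ => exact (hd _ (BStep.allStep x φ e s b n a)).elim
  | lab L φ => exact (hd _ (BStep.labStep L φ e s b n)).elim

theorem winP_eloise_step {M : Struct.{u} V} {p : SCLPos V M.Dom} {n : ℕ}
    (hW : WinP M p n) (ht : posTurn p = .eloise) (hex : ∃ q, BStep M (p, n) q) :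
    ∃ q, BStep M (p, n) q ∧ WinP M q.1 q.2 := by
  classical
  obtain ⟨ψ, e, s, b⟩ := p
  simp only [WinP] at hW ⊢
  cases ψ with
  | bot => obtain ⟨q, hq⟩ := hex; cases hq
  | eq x y => obtain ⟨q, hq⟩ := hex; cases hq
  | rel R args => obtain ⟨q, hq⟩ := hex; cases hq
  | claim L =>
    cases n with
    | zero => obtain ⟨q, hq⟩ := hex; cases hq
    | succ k =>
      cases he : e L with
      | none =>
        obtain ⟨q, hq⟩ := hex
        cases hq with
        | claimStep _ _ _ _ χ _ h => rw [he] at h; cases h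
      | some χ =>
        refine ⟨(⟨χ, e, s, b⟩, k), BStep.claimStep L e s b χ k he, ?_⟩
        rwa [approx_claim_succ_some k e b L χ he] at hW
  | not φ =>
    refine ⟨(⟨φ, e, s, !b⟩, n), BStep.neg φ e s b n, ?_⟩
    rw [approx_not] at hW
    cases b <;> simp only [FOSat, Bool.not_true, Bool.not_false] at hW ⊢ <;> tauto
  | and φ ψ =>
    cases b with
    | true => simp [posTurn] at ht
    | false =>
      rw [approx_and] at hW
      simp only [FOSat] at hW
      by_cases hA : FOSat M s (approx n e false φ)
      · refine ⟨(⟨ψ, e, s, false⟩, n), BStep.andRight φ ψ e s false n, ?_⟩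
        simp only [Bool.false_eq_true, iff_false] at hW ⊢
        exact fun hB => hW ⟨hA, hB⟩
      · exact ⟨(⟨φ, e, s, false⟩, n), BStep.andLeft φ ψ e s false n, by simpa using hA⟩
  | or φ ψ =>
    cases b with
    | false => simp [posTurn] at ht
    | true =>
      rw [approx_or] at hW
      simp only [FOSat, iff_true] at hW
      rcases hW with hA | hB
      · exact ⟨(⟨φ, e, s, true⟩, n), BStep.orLeft φ ψ e s true n, by simpa using hA⟩
      · exact ⟨(⟨ψ, e, s, true⟩, n), BStep.orRight φ ψ e s true n, by simpa using hB⟩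
  | ex x φ =>
    cases b with
    | false => simp [posTurn] at ht
    | true =>
      rw [approx_ex] at hW
      simp only [FOSat, iff_true] at hW
      obtain ⟨a, ha⟩ := hW
      exact ⟨(⟨φ, e, Function.update s x a, true⟩, n), BStep.exStep x φ e s true n a,
        by simpa using ha⟩
  | all x φ =>
    cases b with
    | true => simp [posTurn] at ht
    | false =>
      rw [approx_all] at hW
      simp only [FOSat, Bool.false_eq_true, iff_false, not_forall] at hW
      obtain ⟨a, ha⟩ := hW
      exact ⟨(⟨φ, e, Function.update s x a, false⟩, n), BStep.allStep x φ e s false n a,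
        by simpa using ha⟩
  | lab L φ =>
    refine ⟨(⟨φ, Function.update e L (some (.lab L φ)), s, b⟩, n), BStep.labStep L φ e s b n, ?_⟩
    rwa [approx_lab] at hW

theorem winP_step_back {M : Struct.{u} V} {p : SCLPos V M.Dom} {n : ℕ}
    {q : SCLPos V M.Dom × ℕ} (ht : posTurn p = .eloise) (hstep : BStep M (p, n) q)
    (hWq : WinP M q.1 q.2) : WinP M p n := by
  cases hstep with
  | neg φ e s b _ =>
    simp only [WinP] at hWq ⊢
    rw [approx_not]
    cases b <;> simp only [FOSat, Bool.not_true, Bool.not_false] at hWq ⊢ <;> tauto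
  | andLeft φ ψ e s b _ =>
    cases b with
    | true => simp [posTurn] at ht
    | false =>
      simp only [WinP] at hWq ⊢
      rw [approx_and]
      simp only [FOSat, Bool.false_eq_true, iff_false] at hWq ⊢
      exact fun h => hWq h.1
  | andRight φ ψ e s b _ =>
    cases b with
    | true => simp [posTurn] at ht
    | false =>
      simp only [WinP] at hWq ⊢
      rw [approx_and]
      simp only [FOSat, Bool.false_eq_true, iff_false] at hWq ⊢
      exact fun h => hWq h.2
  | orLeft φ ψ e s b _ =>
    cases b with
    | false => simp [posTurn] at ht
    | true =>
      simp only [WinP] at hWq ⊢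
      rw [approx_or]
      simp only [FOSat, iff_true] at hWq ⊢
      exact .inl hWq
  | orRight φ ψ e s b _ =>
    cases b with
    | false => simp [posTurn] at ht
    | true =>
      simp only [WinP] at hWq ⊢
      rw [approx_or]
      simp only [FOSat, iff_true] at hWq ⊢
      exact .inr hWq
  | exStep x φ e s b _ a =>
    cases b with
    | false => simp [posTurn] at ht
    | true =>
      simp only [WinP] at hWq ⊢
      rw [approx_ex]
      simp only [FOSat, iff_true] at hWq ⊢
      exact ⟨a, hWq⟩
  | allStep x φ e s b _ a =>
    cases b with
    | true => simp [posTurn] at ht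
    | false =>
      simp only [WinP] at hWq ⊢
      rw [approx_all]
      simp only [FOSat, Bool.false_eq_true, iff_false] at hWq ⊢
      exact fun h => hWq (h a)
  | labStep L φ e s b _ =>
    simp only [WinP] at hWq ⊢
    rwa [approx_lab]
  | claimStep L e s b χ k he =>
    simp only [WinP] at hWq ⊢
    rwa [approx_claim_succ_some k e b L χ he]

theorem winP_abelard_step {M : Struct.{u} V} {p : SCLPos V M.Dom} {n : ℕ}
    {q : SCLPos V M.Dom × ℕ} (ht : posTurn p ≠ .eloise) (hstep : BStep M (p, n) q)
    (hW : WinP M p n) : WinP M q.1 q.2 := by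
  cases hstep with
  | neg φ e s b _ => exact absurd rfl ht
  | andLeft φ ψ e s b _ =>
    cases b with
    | false => exact absurd rfl ht
    | true =>
      simp only [WinP] at hW ⊢
      rw [approx_and] at hW
      simp only [FOSat, iff_true] at hW ⊢
      exact hW.1
  | andRight φ ψ e s b _ =>
    cases b with
    | false => exact absurd rfl ht
    | true =>
      simp only [WinP] at hW ⊢
      rw [approx_and] at hW
      simp only [FOSat, iff_true] at hW ⊢
      exact hW.2
  | orLeft φ ψ e s b _ =>
    cases b with
    | true => exact absurd rfl ht
    | false =>
      simp only [WinP] at hW ⊢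
      rw [approx_or] at hW
      simp only [FOSat, Bool.false_eq_true, iff_false] at hW ⊢
      exact fun h => hW (.inl h)
  | orRight φ ψ e s b _ =>
    cases b with
    | true => exact absurd rfl ht
    | false =>
      simp only [WinP] at hW ⊢
      rw [approx_or] at hW
      simp only [FOSat, Bool.false_eq_true, iff_false] at hW ⊢
      exact fun h => hW (.inr h)
  | exStep x φ e s b _ a =>
    cases b with
    | true => exact absurd rfl ht
    | false =>
      simp only [WinP] at hW ⊢
      rw [approx_ex] at hW
      simp only [FOSat, Bool.false_eq_true, iff_false] at hW ⊢
      exact fun h => hW ⟨a, h⟩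
  | allStep x φ e s b _ a =>
    cases b with
    | false => exact absurd rfl ht
    | true =>
      simp only [WinP] at hW ⊢
      rw [approx_all] at hW
      simp only [FOSat, iff_true] at hW ⊢
      exact hW a
  | labStep L φ e s b _ => exact absurd rfl ht
  | claimStep L e s b χ k he => exact absurd rfl ht

theorem winP_of_all {M : Struct.{u} V} {p : SCLPos V M.Dom} {n : ℕ}
    (ht : posTurn p ≠ .eloise) (hall : ∀ q, BStep M (p, n) q → WinP M q.1 q.2)
    (hex : ∃ q, BStep M (p, n) q) : WinP M p n := by
  obtain ⟨ψ, e, s, b⟩ := p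
  cases ψ with
  | bot => exact absurd rfl ht
  | eq x y => exact absurd rfl ht
  | rel R args => exact absurd rfl ht
  | claim L => exact absurd rfl ht
  | not φ => exact absurd rfl ht
  | lab L φ => exact absurd rfl ht
  | and φ ψ =>
    cases b with
    | false => exact absurd rfl ht
    | true =>
      have h1 := hall _ (BStep.andLeft φ ψ e s true n)
      have h2 := hall _ (BStep.andRight φ ψ e s true n)
      simp only [WinP] at h1 h2 ⊢
      rw [approx_and]
      simp only [FOSat, iff_true] at h1 h2 ⊢
      exact ⟨h1, h2⟩
  | or φ ψ =>
    cases b with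
    | true => exact absurd rfl ht
    | false =>
      have h1 := hall _ (BStep.orLeft φ ψ e s false n)
      have h2 := hall _ (BStep.orRight φ ψ e s false n)
      simp only [WinP] at h1 h2 ⊢
      rw [approx_or]
      simp only [FOSat, Bool.false_eq_true, iff_false] at h1 h2 ⊢
      exact fun h => h.elim h1 h2
  | ex x φ =>
    cases b with
    | true => exact absurd rfl ht
    | false =>
      simp only [WinP]
      rw [approx_ex]
      simp only [FOSat, Bool.false_eq_true, iff_false, not_exists]
      intro a h
      have := hall _ (BStep.exStep x φ e s false n a)
      simp only [WinP, FOSat, Bool.false_eq_true, iff_false] at this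
      exact this h
  | all x φ =>
    cases b with
    | false => exact absurd rfl ht
    | true =>
      simp only [WinP]
      rw [approx_all]
      simp only [FOSat, iff_true]
      intro a
      have := hall _ (BStep.allStep x φ e s true n a)
      simp only [WinP, FOSat, iff_true] at this
      exact this

theorem hasWS_gameB_iff (M : Struct.{u} V) (p : SCLPos V M.Dom) (n : ℕ) :
    (gameB M).HasWinningStrategy .eloise (p, n) ↔ WinP M p n := by
  constructor
  · have key : ∀ v : SCLPos V M.Dom × ℕ,
        (gameB M).HasWinningStrategy .eloise v → WinP M v.1 v.2 := by
      intro v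
      induction v using WellFounded.induction (InvImage.wf bMeasure lexwf) with
      | _ v ih =>
        intro hws
        obtain ⟨pp, nn⟩ := v
        obtain ⟨σ, hσ⟩ := hws
        by_cases hd : ∀ q, ¬ BStep M (pp, nn) q
        · exact winP_of_posWin nn ((gameB M).win_of_deadEnd hσ hd)
        · push_neg at hd
          by_cases ht : posTurn pp = .eloise
          · have hedge : (gameB M).edge (pp, nn) (σ [(pp, nn)]) :=
              (gameB M).edge_root hσ ht hd
            have hws' := (gameB M).ws_step hσ hedge (fun _ => rfl)
            have hwq := ih _ (bstep_lex hedge) ⟨_, hws'⟩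
            exact winP_step_back ht hedge hwq
          · refine winP_of_all ht ?_ hd
            intro q hq
            have hws' := (gameB M).ws_step hσ hq (fun h => absurd h ht)
            exact ih q (bstep_lex hq) ⟨_, hws'⟩
    exact fun h => key (p, n) h
  · intro hW
    exact (gameB M).winning_of_invariant (fun q => WinP M q.1 q.2) (gameB_noinf M)
      (fun v hI hdead => winP_deadEnd hI hdead)
      (fun v hI ht hex => winP_eloise_step hI ht hex)
      (fun v x hI ht hx => winP_abelard_step ht hx hI)
      (p, n) hW


set_option autoImplicit false
open SCLFormula

variable {V : Vocab}

/-- Lexicographic measure for the game `G_ω`. -/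
def gm {D : Type u} : GOPos V D → ℕ × ℕ × ℕ
  | .start => (2, 0, 0)
  | .mid _ => (1, 0, 0)
  | .inner p k => (0, k, fsize p.form)

theorem lexwf3 : WellFounded (Prod.Lex ((· < ·) : ℕ → ℕ → Prop)
    (Prod.Lex ((· < ·) : ℕ → ℕ → Prop) ((· < ·) : ℕ → ℕ → Prop))) :=
  (Nat.lt_wfRel.wf).prod_lex lexwf

theorem gostep_lex {M : Struct.{u} V} {φ : SCLFormula V} {s : ℕ → M.Dom}
    {a b : GOPos V M.Dom} (h : GOStep M φ s a b) :
    Prod.Lex ((· < ·) : ℕ → ℕ → Prop)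
      (Prod.Lex ((· < ·) : ℕ → ℕ → Prop) ((· < ·) : ℕ → ℕ → Prop)) (gm b) (gm a) := by
  cases h with
  | abelardPick n' => exact Prod.Lex.left _ _ (by omega)
  | eloisePick n' n h => exact Prod.Lex.left _ _ (by omega)
  | play p q m k hb => exact Prod.Lex.right _ (bstep_lex hb)

theorem gameOmega_noinf (M : Struct.{u} V) (φ : SCLFormula V) (s : ℕ → M.Dom)
    (v : GOPos V M.Dom) (f : ℕ → GOPos V M.Dom) : ¬ (gameOmega M φ s).IsInfPlay v f := by
  rintro ⟨_, hs⟩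
  exact no_descending (InvImage.wf gm lexwf3) f (fun n => gostep_lex (hs n))

theorem gostep_mid_inv {M : Struct.{u} V} {φ : SCLFormula V} {s : ℕ → M.Dom} {n' : ℕ}
    {x : GOPos V M.Dom} (h : GOStep M φ s (.mid n') x) :
    ∃ n, n' ≤ n ∧ x = .inner (initPos φ s) n := by
  cases h with
  | eloisePick _ n hle => exact ⟨n, hle, rfl⟩

theorem gostep_inner_inv {M : Struct.{u} V} {φ : SCLFormula V} {s : ℕ → M.Dom}
    {q : SCLPos V M.Dom} {k : ℕ} {x : GOPos V M.Dom} (h : GOStep M φ s (.inner q k) x) :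
    ∃ q' k', x = .inner q' k' ∧ BStep M (q, k) (q', k') := by
  cases h with
  | play _ q' _ k' hb => exact ⟨q', k', rfl, hb⟩

theorem ws_inner_to_gameB (M : Struct.{u} V) (φ : SCLFormula V) (s : ℕ → M.Dom)
    (p : SCLPos V M.Dom) (m : ℕ)
    (h : (gameOmega M φ s).HasWinningStrategy .eloise (.inner p m)) :
    (gameB M).HasWinningStrategy .eloise (p, m) := by
  classical
  obtain ⟨σ, hσ⟩ := h
  set F : SCLPos V M.Dom × ℕ → GOPos V M.Dom := fun a => .inner a.1 a.2 with hF
  set G : GOPos V M.Dom → SCLPos V M.Dom × ℕ := fun v =>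
    match v with
    | .inner q k => (q, k)
    | _ => (p, m) with hG
  have hwalk : ∀ w, (gameB M).IsWalkFrom (p, m) w →
      (gameOmega M φ s).IsWalkFrom (.inner p m) (w.map F) := by
    intro w hw
    refine ⟨?_, ?_⟩
    · rw [List.head?_map, hw.1]; rfl
    · apply (List.isChain_map F).2
      exact hw.2.imp (fun a b hab => GOStep.play a.1 b.1 a.2 b.2 hab)
  refine ⟨fun w => G (σ (w.map F)), ?_, ?_, fun f hf _ => gameB_noinf M (p, m) f hf⟩
  · -- legal
    intro w u hw hlast hturn hex
    have hlast' : (w.map F).getLast? = some (F u) := by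
      rw [List.getLast?_map, hlast]; rfl
    obtain ⟨x, hx⟩ := hex
    have hexF : ∃ y, (gameOmega M φ s).edge (F u) y :=
      ⟨F x, GOStep.play _ _ _ _ hx⟩
    have hmove := hσ.1 (w.map F) (F u) (hwalk w hw) hlast' hturn hexF
    obtain ⟨q', k', hxeq, hb⟩ := gostep_inner_inv hmove
    show (gameB M).edge u (G (σ (w.map F)))
    rw [hxeq]
    exact hb
  · -- finite plays
    intro w hwp hfol
    have hne : w ≠ [] := by
      rintro rfl
      have := hwp.1.1
      simp at this
    obtain ⟨u, hu⟩ : ∃ u, w.getLast? = some u := by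
      cases hq : w.getLast? with
      | none => exact absurd (List.getLast?_eq_none_iff.1 hq) hne
      | some u => exact ⟨u, rfl⟩
    have hplay' : (gameOmega M φ s).IsFinitePlay (.inner p m) (w.map F) := by
      refine ⟨hwalk w hwp.1, ?_⟩
      intro y hy
      rw [List.getLast?_map, hu] at hy
      simp only [Option.map_some, Option.some.injEq] at hy
      subst hy
      intro z hz
      obtain ⟨q', k', rfl, hb⟩ := gostep_inner_inv hz
      exact hwp.2 u hu (q', k') hb
    have hfolF : (gameOmega M φ s).FollowsFin .eloise σ (w.map F) := by
      intro q' u' y hpre hlast' hturn'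
      -- decompose the prefix of a mapped list
      obtain ⟨t, ht⟩ := hpre
      obtain ⟨w1, w2, rfl, hw1, hw2⟩ := List.map_eq_append_iff.1 (by rw [← ht, List.append_assoc])
      obtain ⟨a, b, rfl, ha, hb⟩ := List.map_eq_append_iff.1 hw1
      obtain ⟨y₀, rfl⟩ : ∃ y₀, b = [y₀] := by
        cases b with
        | nil => simp at hb
        | cons c t' =>
          cases t' with
          | nil => exact ⟨c, rfl⟩
          | cons d t'' => simp at hb
      simp only [List.map_cons, List.map_nil, List.cons.injEq, and_true] at hb
      subst ha
      subst hb
      have hprew : (a ++ [y₀]) <+: (a ++ [y₀]) ++ w2 := List.prefix_append _ _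
      obtain ⟨u₀, hu₀, rfl⟩ : ∃ u₀, a.getLast? = some u₀ ∧ u' = F u₀ := by
        rw [List.getLast?_map] at hlast'
        cases hq : a.getLast? with
        | none => rw [hq] at hlast'; simp at hlast'
        | some u₀ =>
          rw [hq] at hlast'
          simp only [Option.map_some, Option.some.injEq] at hlast'
          exact ⟨u₀, rfl, hlast'.symm⟩
      have hane : a ≠ [] := by
        rintro rfl
        simp at hu₀
      -- a is a walk from (p, m)
      have hwa : (gameB M).IsWalkFrom (p, m) a := by
        refine ⟨?_, ?_⟩
        · have h2 := hwp.1.1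
          rwa [List.head?_append_of_ne_nil _ (by simp [hane]),
            List.head?_append_of_ne_nil _ hane] at h2
        · exact hwp.1.2.prefix ((a.prefix_append [y₀]).trans ((a ++ [y₀]).prefix_append w2))
      -- the edge taken from u₀ to y₀
      have hedge : (gameB M).edge u₀ y₀ := by
        have hchain : List.Chain' (gameB M).edge (a ++ [y₀]) :=
          hwp.1.2.prefix ⟨w2, rfl⟩
        have := (List.isChain_append.1 hchain).2.2
        exact this u₀ hu₀ y₀ rfl
      have hexF : ∃ y, (gameOmega M φ s).edge (F u₀) y := ⟨F y₀, GOStep.play _ _ _ _ hedge⟩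
      have hmove := hσ.1 (a.map F) (F u₀) (hwalk a hwa)
        (by rw [List.getLast?_map, hu₀]; rfl) hturn' hexF
      obtain ⟨q'', k'', hxeq, hb'⟩ := gostep_inner_inv hmove
      -- y₀ follows the transferred strategy
      have hy₀ : y₀ = G (σ (a.map F)) :=
        hfol a u₀ y₀ ⟨w2, rfl⟩ hu₀ hturn'
      show F y₀ = σ (a.map F)
      rw [hy₀, hxeq]
    obtain ⟨u', hu', hwin⟩ := hσ.2.1 (w.map F) hplay' hfolF
    refine ⟨u, hu, ?_⟩
    rw [List.getLast?_map, hu] at hu'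
    simp only [Option.map_some, Option.some.injEq] at hu'
    rw [← hu'] at hwin
    exact hwin

/-- Per-model characterisation: truth in the bounded semantics is equivalent to
the truth of some approximant. -/
theorem bndTrue_iff_approx (M : Struct.{u} V) (s : ℕ → M.Dom) (φ : SCLFormula V) :
    BndTrue M s φ ↔ ∃ n, FOSat M s (approximant φ n) := by
  constructor
  · rintro ⟨σ, hσ⟩
    have h1 : (gameOmega M φ s).edge .start (.mid 0) := GOStep.abelardPick 0
    have hσ1 := (gameOmega M φ s).ws_step hσ h1 (fun h => Player.noConfusion h)
    have hex : ∃ x, (gameOmega M φ s).edge (.mid 0) x :=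
      ⟨.inner (initPos φ s) 0, GOStep.eloisePick 0 0 le_rfl⟩
    have hedge := (gameOmega M φ s).edge_root hσ1 rfl hex
    obtain ⟨n, _, hxeq⟩ := gostep_mid_inv hedge
    have hσ2 := (gameOmega M φ s).ws_step hσ1 hedge (fun _ => rfl)
    rw [hxeq] at hσ2
    have hb := ws_inner_to_gameB M φ s (initPos φ s) n ⟨_, hσ2⟩
    rw [hasWS_gameB_iff] at hb
    refine ⟨n, ?_⟩
    simpa [WinP, initPos, approximant] using hb
  · rintro ⟨n₀, hn₀⟩
    apply (gameOmega M φ s).winning_of_invariant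
      (fun v => match v with
        | .start => True
        | .mid _ => True
        | .inner q k => WinP M q k)
      (gameOmega_noinf M φ s) ?_ ?_ ?_ .start trivial
    · -- dead ends
      intro v hI hd
      match v with
      | .start => exact (hd (.mid 0) (GOStep.abelardPick 0)).elim
      | .mid n' => exact (hd (.inner (initPos φ s) n') (GOStep.eloisePick n' n' le_rfl)).elim
      | .inner q k =>
        exact winP_deadEnd hI (fun q' hq' => hd (.inner q'.1 q'.2) (GOStep.play _ _ _ _ hq'))
    · -- eloise moves
      intro v hI ht hex
      match v, ht with
      | .mid n', _ =>
        refine ⟨.inner (initPos φ s) (max n' n₀), GOStep.eloisePick n' _ (le_max_left _ _), ?_⟩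
        show WinP M (initPos φ s) (max n' n₀)
        simp only [WinP, initPos, iff_true]
        exact approx_mono_le M (le_max_right n' n₀) φ _ s hn₀
      | .inner q k, ht =>
        have hexB : ∃ q', BStep M (q, k) q' := by
          obtain ⟨x, hx⟩ := hex
          obtain ⟨q', k', rfl, hb⟩ := gostep_inner_inv hx
          exact ⟨(q', k'), hb⟩
        obtain ⟨q', hb, hW'⟩ := winP_eloise_step hI ht hexB
        exact ⟨.inner q'.1 q'.2, GOStep.play _ _ _ _ hb, hW'⟩
    · -- abelard moves
      intro v x hI ht hx
      cases hx with
      | abelardPick n' => trivial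
      | eloisePick n' n h => exact absurd rfl ht
      | play q q' k k' hb => exact winP_abelard_step ht hb hI


set_option autoImplicit false
open FirstOrder FirstOrder.Language

/-- The first-order language associated with a vocabulary. -/
def lang (V : Vocab) : FirstOrder.Language.{0, 0} where
  Functions := fun _ => Empty
  Relations := fun n => { R : V.Rel // V.arity R = n }

/-- The canonical `lang V`-structure on a suitable model. -/
def structOn {V : Vocab} (M : Struct.{u} V) : (lang V).Structure M.Dom where
  funMap := fun f _ => f.elim
  RelMap := fun r v => M.interp r.1 (fun i => v (Fin.cast r.2 i))

/-- Variable renaming used when crossing a quantifier. -/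
def bump {k : ℕ} (m : ℕ → ℕ ⊕ Fin k) (x : ℕ) : ℕ → ℕ ⊕ Fin (k + 1) := fun y =>
  if y = x then Sum.inr (Fin.last k) else Sum.map id Fin.castSucc (m y)

/-- Translation of (FO fragments of) SCL formulas to genuine first-order formulas. -/
def toFO {V : Vocab} : {k : ℕ} → (ℕ → ℕ ⊕ Fin k) → SCLFormula V → (lang V).BoundedFormula ℕ k
  | _, _, .bot => ⊥
  | _, m, .eq x y => Term.bdEqual (Term.var (m x)) (Term.var (m y))
  | _, m, .rel R a =>
      Relations.boundedFormula (L := lang V)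
        (⟨R, rfl⟩ : { S : V.Rel // V.arity S = V.arity R }) (fun i => Term.var (m (a i)))
  | _, _, .claim _ => ⊥
  | _, m, .not φ => ∼(toFO m φ)
  | _, m, .and φ ψ => toFO m φ ⊓ toFO m ψ
  | _, m, .or φ ψ => toFO m φ ⊔ toFO m ψ
  | _, m, .ex x φ => (toFO (bump m x) φ).ex
  | _, m, .all x φ => (toFO (bump m x) φ).all
  | _, m, .lab _ φ => toFO m φ

theorem bump_elim {V : Vocab} (M : Struct.{u} V) {k : ℕ} (m : ℕ → ℕ ⊕ Fin k) (x : ℕ)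
    (v : ℕ → M.Dom) (xs : Fin k → M.Dom) (a : M.Dom) :
    (fun y => Sum.elim v (Fin.snoc xs a) (bump m x y))
      = Function.update (fun y => Sum.elim v xs (m y)) x a := by
  funext y
  by_cases hy : y = x
  · subst hy
    simp [bump, Fin.snoc_last]
  · simp only [bump, if_neg hy, Function.update_of_ne hy]
    cases hm : m y with
    | inl z => simp
    | inr i => simp [Fin.snoc_castSucc]

theorem realize_toFO {V : Vocab} (M : Struct.{u} V) [inst : (lang V).Structure M.Dom]
    (hc : ∀ (R : V.Rel) (f : Fin (V.arity R) → M.Dom),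
      Structure.RelMap (L := lang V)
        (⟨R, rfl⟩ : { S : V.Rel // V.arity S = V.arity R }) f ↔ M.interp R f) :
    ∀ (ψ : SCLFormula V) {k : ℕ} (m : ℕ → ℕ ⊕ Fin k) (xs : Fin k → M.Dom) (v : ℕ → M.Dom),
      (toFO m ψ).Realize v xs ↔ FOSat M (fun y => Sum.elim v xs (m y)) ψ := by
  intro ψ
  induction ψ with
  | bot => intro k m xs v; simp [toFO, FOSat]
  | eq x y =>
    intro k m xs v
    simp [toFO, BoundedFormula.realize_bdEqual, Term.realize, FOSat]
  | rel R a =>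
    intro k m xs v
    simp only [toFO, BoundedFormula.realize_rel, Term.realize, FOSat]
    exact hc R _
  | claim L => intro k m xs v; simp [toFO, FOSat]
  | not φ ih =>
    intro k m xs v
    simp only [toFO, BoundedFormula.realize_not, FOSat]
    rw [ih m xs v]
  | and φ ψ ihφ ihψ =>
    intro k m xs v
    simp only [toFO, BoundedFormula.realize_inf, FOSat]
    rw [ihφ m xs v, ihψ m xs v]
  | or φ ψ ihφ ihψ =>
    intro k m xs v
    simp only [toFO, BoundedFormula.realize_sup, FOSat]
    rw [ihφ m xs v, ihψ m xs v]
  | ex x φ ih =>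
    intro k m xs v
    simp only [toFO, BoundedFormula.realize_ex, FOSat]
    refine exists_congr fun a => ?_
    rw [ih (bump m x) (Fin.snoc xs a) v, bump_elim M m x v xs a]
  | all x φ ih =>
    intro k m xs v
    simp only [toFO, BoundedFormula.realize_all, FOSat]
    refine forall_congr' fun a => ?_
    rw [ih (bump m x) (Fin.snoc xs a) v, bump_elim M m x v xs a]
  | lab L φ ih =>
    intro k m xs v
    simp only [toFO, FOSat]
    exact ih m xs v

theorem exists_uniform {V : Vocab} (φ : SCLFormula V)
    (h : ∀ (M : Struct.{u} V) (s : ℕ → M.Dom), ∃ n, FOSat M s (approximant φ n)) :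
    ∃ n : ℕ, FOValid.{u} (approximant φ n) := by
  by_contra hno
  push_neg at hno
  have hex : ∀ n : ℕ, ∃ (M : Struct.{u} V) (s : ℕ → M.Dom), ¬ FOSat M s (approximant φ n) := by
    intro n
    have h' := hno n
    unfold FOValid at h'
    push_neg at h'
    exact h'
  choose Mf sf hMf using hex
  letI : ∀ n : ℕ, (lang V).Structure (Mf n).Dom := fun n => structOn (Mf n)
  haveI : ∀ n : ℕ, Nonempty ((Mf n).Dom) := fun n => (Mf n).dom_nonempty
  letI uf : Ultrafilter ℕ := Filter.hyperfilter ℕ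
  letI NInst : (lang V).Structure ((↑uf : Filter ℕ).Product (fun n => (Mf n).Dom)) :=
    @Ultraproduct.structure ℕ (fun n => (Mf n).Dom) uf (lang V) _
  haveI hN : Nonempty ((↑uf : Filter ℕ).Product (fun n => (Mf n).Dom)) :=
    Ultraproduct.Product.instNonempty
  let MN : Struct.{u} V :=
    ⟨(↑uf : Filter ℕ).Product (fun n => (Mf n).Dom), hN,
      fun R f => Structure.RelMap (L := lang V)
        (⟨R, rfl⟩ : { S : V.Rel // V.arity S = V.arity R }) f⟩
  obtain ⟨n, hn⟩ := h MN (fun b => (↑(fun i => sf i b) : (↑uf : Filter ℕ).Product _))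
  have hn' : (toFO (k := 0) Sum.inl (approximant φ n)).Realize
      (fun b => (↑(fun i => sf i b) : (↑uf : Filter ℕ).Product (fun n => (Mf n).Dom)))
      (default : Fin 0 → MN.Dom) :=
    (realize_toFO MN (inst := NInst) (fun R f => Iff.rfl) (approximant φ n) Sum.inl default _).2 hn
  have hev := (Ultraproduct.realize_formula_cast (L := lang V)
      (toFO (k := 0) Sum.inl (approximant φ n)) (fun b i => sf i b)).1 hn'
  have hsub : {i : ℕ | (toFO (k := 0) Sum.inl (approximant φ n)).Realize (fun b => sf i b)
      (default : Fin 0 → (Mf i).Dom)} ⊆ {i : ℕ | i < n} := by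
    intro i hi
    by_contra hlt
    simp only [Set.mem_setOf_eq, not_lt] at hlt
    have hFO : FOSat (Mf i) (sf i) (approximant φ n) :=
      (realize_toFO (Mf i) (fun R f => Iff.rfl) (approximant φ n) Sum.inl default (sf i)).1 hi
    exact hMf i (approx_mono_le (Mf i) hlt φ _ (sf i) hFO)
  have hmem : {i : ℕ | i < n} ∈ (↑uf : Filter ℕ) := Filter.mem_of_superset hev hsub
  exact Filter.notMem_hyperfilter_of_finite (Set.finite_Iio n) hmem

/-- A BndSCL formula is valid under bounded semantics iff
some first-order approximant `Φⁿ_φ` is valid. -/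
theorem bndscl_valid_iff_some_approximant_valid {V : Vocab} (φ : SCLFormula V) :
    BndValid.{u} φ ↔ ∃ n : ℕ, FOValid.{u} (approximant φ n) := by
  constructor
  · intro h
    exact exists_uniform φ (fun M s => (bndTrue_iff_approx M s φ).1 (h M s))
  · rintro ⟨n, hn⟩ M s
    exact (bndTrue_iff_approx M s φ).2 ⟨n, hn M s⟩
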